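/- The bound n − 1 on the total subsidy is tight: in the instance with n agents, a single good g, and each agent's valuation v_i(S) = 1 if g ∈ S and 0 otherwise, every envy-free solution (A, p) with a complete allocation satisfies ∑_{i=1}^n p_i ≥ n − 1. -/
import Mathlib


/-- Tightness: In the instance with `n` agents and a single good,
where each agent values a bundle `1` if it contains the good and `0` otherwise,
every envy-free solution `(A, p)` with a complete allocation requires total
subsidy at least `n - 1`. -/
theorem total_subsidy_lower_bound {n : ℕ} (hn : 1 ≤ n)
    (v : Fin n → Finset (Fin 1) → ℝ)
    (hv : ∀ i S, v i S = if (0 : Fin 1) ∈ S then 1 else 0)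
    (A : Fin n → Finset (Fin 1))
    (hdisj : ∀ i j, i ≠ j → Disjoint (A i) (A j))
    (hcomplete : ∀ g : Fin 1, ∃ i, g ∈ A i)
    (p : Fin n → ℝ) (hp : ∀ i, 0 ≤ p i)
    (hEF : ∀ i j, v i (A j) + p j ≤ v i (A i) + p i) :
    (n : ℝ) - 1 ≤ ∑ i, p i := by
  obtain ⟨w, hw⟩ := hcomplete 0
  have key : ∀ i ∈ Finset.univ.erase w, (1 : ℝ) ≤ p i := by
    intro i hi
    have hiw : i ≠ w := (Finset.mem_erase.mp hi).1
    have h0 : (0 : Fin 1) ∉ A i := fun h =>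
      Finset.disjoint_left.mp (hdisj i w hiw) h hw
    have := hEF i w
    rw [hv i (A w), hv i (A i), if_pos hw, if_neg h0] at this
    linarith [hp w]
  have hsum : ∑ i, p i = p w + ∑ i ∈ Finset.univ.erase w, p i := by
    rw [← Finset.add_sum_erase _ _ (Finset.mem_univ w)]
  have h1 : ((Finset.univ.erase w).card : ℝ) ≤ ∑ i ∈ Finset.univ.erase w, p i := by
    simpa using Finset.card_nsmul_le_sum _ _ _ key
  rw [Finset.card_erase_of_mem (Finset.mem_univ w), Finset.card_univ, Fintype.card_fin] at h1
  have : ((n - 1 : ℕ) : ℝ) = (n : ℝ) - 1 := by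
    push_cast [hn]; ring
  linarith [hp w, this ▸ h1]
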